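/- Cographs satisfy the Ramsey bound R(s,t) ≤ s·t: every cograph on more than (s-1)(t-1) vertices contains a clique of size s or an independent set of size t. Equivalently, in a perfect graph on n vertices, the product of the clique number and the independence number is at least n. -/

import Mathlib

universe u

theorem aux19 (n : ℕ) : ∀ {V : Type u} [Fintype V] [DecidableEq V] (G : SimpleGraph V),
    (∀ a b c d : V,
      ¬ (G.Adj a b ∧ G.Adj b c ∧ G.Adj c d ∧ ¬ G.Adj a c ∧ ¬ G.Adj a d ∧ ¬ G.Adj b d)) →
    ∀ s t : ℕ, Fintype.card V ≤ n → (s - 1) * (t - 1) < Fintype.card V →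
    (∃ C : Finset V, C.card = s ∧ ∀ u ∈ C, ∀ v ∈ C, u ≠ v → G.Adj u v) ∨
    (∃ S : Finset V, S.card = t ∧ ∀ u ∈ S, ∀ v ∈ S, ¬ G.Adj u v) := by
  induction n with
  | zero =>
    intro V _ _ G hco s t hn hcard
    omega
  | succ n ih =>
    intro V _ _ G hco s t hn hcard
    classical
    have hV0 : 0 < Fintype.card V := Nat.lt_of_le_of_lt (Nat.zero_le _) hcard
    obtain ⟨v0⟩ : Nonempty V := Fintype.card_pos_iff.mp hV0
    by_cases hs0 : s = 0
    · exact Or.inl ⟨∅, by simp [hs0], by simp⟩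
    by_cases ht0 : t = 0
    · exact Or.inr ⟨∅, by simp [ht0], by simp⟩
    by_cases hs1 : s = 1
    · refine Or.inl ⟨{v0}, by simp [hs1], ?_⟩
      intro u hu v hv huv
      simp only [Finset.mem_singleton] at hu hv
      exact absurd (hu.trans hv.symm) huv
    by_cases ht1 : t = 1
    · refine Or.inr ⟨{v0}, by simp [ht1], ?_⟩
      intro u hu v hv
      simp only [Finset.mem_singleton] at hu hv
      subst hu; subst hv
      exact G.irrefl
    -- now s ≥ 2 and t ≥ 2
    have hs2 : 2 ≤ s := by omega
    have ht2 : 2 ≤ t := by omega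
    -- take a maximum-cardinality clique C
    set cliques : Finset (Finset V) :=
      Finset.univ.filter (fun D => ∀ u ∈ D, ∀ v ∈ D, u ≠ v → G.Adj u v) with hcliques
    have hsingle : ({v0} : Finset V) ∈ cliques := by
      simp only [hcliques, Finset.mem_filter, Finset.mem_univ, true_and]
      intro u hu v hv huv
      simp only [Finset.mem_singleton] at hu hv
      exact absurd (hu.trans hv.symm) huv
    obtain ⟨C, hCmem, hCmax⟩ := Finset.exists_max_image cliques Finset.card ⟨_, hsingle⟩
    have hCclique : ∀ u ∈ C, ∀ v ∈ C, u ≠ v → G.Adj u v := by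
      have := Finset.mem_filter.mp hCmem
      exact this.2
    have hC1 : 1 ≤ C.card := by
      have := hCmax _ hsingle
      simpa using this
    by_cases hsC : s ≤ C.card
    · obtain ⟨D, hDsub, hDcard⟩ := Finset.exists_subset_card_eq hsC
      exact Or.inl ⟨D, hDcard, fun u hu v hv huv => hCclique u (hDsub hu) v (hDsub hv) huv⟩
    push_neg at hsC
    by_cases hindep : ∃ S : Finset V, S.card = t ∧ ∀ u ∈ S, ∀ v ∈ S, ¬ G.Adj u v
    · exact Or.inr hindep
    -- recurse on the complement of C
    set V' := {v : V // v ∉ C} with hV'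
    set G' : SimpleGraph V' := G.comap Subtype.val with hG'
    have hco' : ∀ a b c d : V',
        ¬ (G'.Adj a b ∧ G'.Adj b c ∧ G'.Adj c d ∧ ¬ G'.Adj a c ∧ ¬ G'.Adj a d ∧ ¬ G'.Adj b d) :=
      fun a b c d h => hco a.1 b.1 c.1 d.1 h
    have hcardV' : Fintype.card V' = Fintype.card V - C.card := by
      simp only [hV', Fintype.card_subtype_compl, Fintype.card_coe]
    have hmul : (s - 1) * (t - 1) = (s - 1) * (t - 2) + (s - 1) := by
      have h2 : t - 1 = (t - 2) + 1 := by omega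
      rw [h2, Nat.mul_succ]
    have hn' : Fintype.card V' ≤ n := by omega
    have harith : (s - 1) * (t - 1 - 1) < Fintype.card V' := by
      have h3 : t - 1 - 1 = t - 2 := by omega
      rw [h3, hcardV']
      omega
    rcases ih G' hco' s (t - 1) hn' harith with ⟨C₀, hC₀card, hC₀cl⟩ | ⟨S₀, hS₀card, hS₀ind⟩
    · -- a clique of size s inside V', push it forward
      refine Or.inl ⟨C₀.image Subtype.val, ?_, ?_⟩
      · rw [Finset.card_image_of_injective _ Subtype.val_injective, hC₀card]
      · intro u hu v hv huv
        obtain ⟨u', hu', rfl⟩ := Finset.mem_image.mp hu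
        obtain ⟨v', hv', rfl⟩ := Finset.mem_image.mp hv
        exact hC₀cl u' hu' v' hv' (fun h => huv (congrArg Subtype.val h))
    · -- an independent set of size t-1 disjoint from C : contradiction
      exfalso
      set S : Finset V := S₀.image Subtype.val with hS
      have hScard : S.card = t - 1 := by
        rw [hS, Finset.card_image_of_injective _ Subtype.val_injective, hS₀card]
      have hSind : ∀ u ∈ S, ∀ v ∈ S, ¬ G.Adj u v := by
        intro u hu v hv
        obtain ⟨u', hu', rfl⟩ := Finset.mem_image.mp hu
        obtain ⟨v', hv', rfl⟩ := Finset.mem_image.mp hv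
        exact hS₀ind u' hu' v' hv'
      have hSdisj : ∀ x ∈ S, x ∉ C := by
        intro x hx
        obtain ⟨x', _, rfl⟩ := Finset.mem_image.mp hx
        exact x'.2
      -- S is a maximal independent set
      have hSmax : ∀ v, v ∉ S → ∃ x ∈ S, G.Adj v x := by
        intro v hv
        by_contra h
        push_neg at h
        apply hindep
        refine ⟨insert v S, ?_, ?_⟩
        · rw [Finset.card_insert_of_notMem hv, hScard]; omega
        · intro u hu w hw hadj
          rcases Finset.mem_insert.mp hu with hu' | hu' <;>
            rcases Finset.mem_insert.mp hw with hw' | hw'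
          · subst hu'; subst hw'; exact G.irrefl hadj
          · subst hu'; exact h w hw' hadj
          · subst hw'; exact h u hu' hadj.symm
          · exact hSind u hu' w hw' hadj
      -- each vertex of C has a neighbor in S
      have hNB : ∀ c ∈ C, ∃ x ∈ S, G.Adj c x :=
        fun c hc => hSmax c (fun hcS => hSdisj c hcS hc)
      -- a "crossing" pair yields an induced P4
      by_cases hcross : ∃ c ∈ C, ∃ c' ∈ C, ∃ x ∈ S, ∃ y ∈ S,
          G.Adj c x ∧ G.Adj c' y ∧ ¬ G.Adj c y ∧ ¬ G.Adj c' x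
      · obtain ⟨c, hc, c', hc', x, hx, y, hy, h1, h2, h3, h4⟩ := hcross
        have hcc' : c ≠ c' := fun h => h4 (h ▸ h1)
        exact hco x c c' y ⟨h1.symm, hCclique c hc c' hc' hcc', h2,
          fun h => h4 h.symm, hSind x hx y hy, h3⟩
      · -- no crossing : neighborhoods in S are totally ordered
        set A : V → Finset V := fun c => S.filter (fun x => G.Adj c x) with hA
        have hcomp : ∀ c ∈ C, ∀ c' ∈ C, A c ⊆ A c' ∨ A c' ⊆ A c := by
          intro c hc c' hc'
          by_contra hcon
          push_neg at hcon
          obtain ⟨x, hxA, hxA'⟩ := Finset.not_subset.mp hcon.1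
          obtain ⟨y, hyA', hyA⟩ := Finset.not_subset.mp hcon.2
          have hxS := (Finset.mem_filter.mp hxA).1
          have hxadj := (Finset.mem_filter.mp hxA).2
          have hyS := (Finset.mem_filter.mp hyA').1
          have hyadj := (Finset.mem_filter.mp hyA').2
          have hxn : ¬ G.Adj c' x := fun h => hxA' (Finset.mem_filter.mpr ⟨hxS, h⟩)
          have hyn : ¬ G.Adj c y := fun h => hyA (Finset.mem_filter.mpr ⟨hyS, h⟩)
          exact hcross ⟨c, hc, c', hc', x, hxS, y, hyS, hxadj, hyadj, hyn, hxn⟩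
        obtain ⟨c₀, hc₀, hc₀min⟩ :=
          Finset.exists_min_image C (fun c => (A c).card) (Finset.card_pos.mp hC1)
        have hsub : ∀ c ∈ C, A c₀ ⊆ A c := by
          intro c hc
          rcases hcomp c₀ hc₀ c hc with h | h
          · exact h
          · exact le_of_eq (Finset.eq_of_subset_of_card_le h (hc₀min c hc)).symm
        obtain ⟨x0, hx0S, hx0adj⟩ := hNB c₀ hc₀
        have hx0 : ∀ c ∈ C, G.Adj c x0 :=
          fun c hc => (Finset.mem_filter.mp (hsub c hc (Finset.mem_filter.mpr ⟨hx0S, hx0adj⟩))).2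
        have hx0C : x0 ∉ C := hSdisj x0 hx0S
        have hbig : insert x0 C ∈ cliques := by
          simp only [hcliques, Finset.mem_filter, Finset.mem_univ, true_and]
          intro u hu w hw huw
          rcases Finset.mem_insert.mp hu with hu' | hu' <;>
            rcases Finset.mem_insert.mp hw with hw' | hw'
          · exact absurd (hu'.trans hw'.symm) huw
          · subst hu'; exact (hx0 w hw').symm
          · subst hw'; exact hx0 u hu'
          · exact hCclique u hu' w hw' huw
        have := hCmax _ hbig
        rw [Finset.card_insert_of_notMem hx0C] at this
        omega

theorem stmt_19 {V : Type*} [Fintype V] [DecidableEq V] (G : SimpleGraph V)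
    (hcograph : ∀ a b c d : V,
      ¬ (G.Adj a b ∧ G.Adj b c ∧ G.Adj c d ∧ ¬ G.Adj a c ∧ ¬ G.Adj a d ∧ ¬ G.Adj b d))
    (s t : ℕ) (hcard : (s - 1) * (t - 1) < Fintype.card V) :
    (∃ C : Finset V, C.card = s ∧ ∀ u ∈ C, ∀ v ∈ C, u ≠ v → G.Adj u v) ∨
    (∃ S : Finset V, S.card = t ∧ ∀ u ∈ S, ∀ v ∈ S, ¬ G.Adj u v) := by
  exact aux19 (Fintype.card V) G hcograph s t le_rfl hcard
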